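/- arXiv:2305.07259 — 8 statements merged into one kernel-verified Lean document; each statement's English description precedes it below -/
import Mathlib

section
/- (Lemma: left-consistency, case i ∉ H') Let T* join T' and T'' by edge (v, v_j), S = S' ∪ S''. Suppose every vertex of color i in T' is consistent in (T', S'), and r'_i := max over w ∈ V(T')∩C_i of (dist(w,S') − dist(w,v)) satisfies r'_i ≤ dist(v_j, S'') + 1. Then every vertex of color i in V(T') is consistent in (T*, S). -/
/-- Distance from a vertex to a set of vertices (∞ if the set is empty). -/
noncomputable def setDist {V : Type*} (G : SimpleGraph V) (u : V) (S : Set V) : ℕ∞ :=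
  ⨅ x ∈ S, G.edist u x

/-- The set of nearest neighbors of `u` in `S`. -/
def nearest {V : Type*} (G : SimpleGraph V) (S : Set V) (u : V) : Set V :=
  {x ∈ S | G.edist u x = setDist G u S}

/-- A vertex `u` is consistent in `(G, S)` if some nearest neighbor of `u` in `S`
has the same color as `u`. -/
def ConsistentAt {V : Type*} {k : ℕ} (G : SimpleGraph V) (c : V → Fin k) (S : Set V)
    (u : V) : Prop :=
  ∃ x ∈ nearest G S u, c x = c u

/-- `S` is a consistent subset of the vertex-colored graph `(G, c)`. -/
def Consistent {V : Type*} {k : ℕ} (G : SimpleGraph V) (c : V → Fin k) (S : Set V) : Prop :=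
  ∀ u, ConsistentAt G c S u

/-- Left consistency, case `i ∉ H'`: if every vertex of color `i` in `T'` is
consistent in `(T', S')` and `r'_i ≤ ℓ'' + 1`, then every vertex of color `i`
in `V(T')` is consistent in `(T*, S' ∪ S'')`. -/
theorem left_consistent_not_inconsistent {V : Type*} {k : ℕ}
    (G : SimpleGraph V) (c : V → Fin k) (i : Fin k) (A B : Set V) (v vj : V)
    (hconn : G.Connected)
    (hv : v ∈ A) (hvj : vj ∈ B) (hdisj : Disjoint A B) (hcover : A ∪ B = Set.univ)
    (hlaw : ∀ w ∈ A, ∀ x ∈ B, G.edist w x = G.edist w v + 1 + G.edist vj x)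
    (S' S'' : Set V) (hS'A : S' ⊆ A) (hS''B : S'' ⊆ B)
    (hCne : (A ∩ {w | c w = i}).Nonempty) (hS' : S'.Nonempty)
    (hcons : ∀ w ∈ A, c w = i → ConsistentAt G c S' w)
    (hr : ∀ w ∈ A, c w = i →
      setDist G w S' - G.edist w v ≤ setDist G vj S'' + 1) :
    ∀ w ∈ A, c w = i → ConsistentAt G c (S' ∪ S'') w := by

  intro w hw hcw
  obtain ⟨x, ⟨hxS', hxd⟩, hcx⟩ := hcons w hw hcw
  have hkey : setDist G w S' ≤ setDist G vj S'' + 1 + G.edist w v :=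
    tsub_le_iff_right.mp (hr w hw hcw)
  have hle : ∀ y ∈ S' ∪ S'', setDist G w S' ≤ G.edist w y := by
    intro y hy
    rcases hy with hy | hy
    · exact iInf₂_le y hy
    · have hyB := hS''B hy
      have := hlaw w hw y hyB
      rw [this]
      have h1 : setDist G vj S'' ≤ G.edist vj y := iInf₂_le y hy
      calc setDist G w S' ≤ setDist G vj S'' + 1 + G.edist w v := hkey
        _ = G.edist w v + 1 + setDist G vj S'' := by ring
        _ ≤ G.edist w v + 1 + G.edist vj y := by gcongr
  have heq : setDist G w (S' ∪ S'') = setDist G w S' := by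
    apply le_antisymm
    · exact iInf₂_le_of_le x (Or.inl hxS') (le_of_eq hxd)
    · exact le_iInf₂ hle
  exact ⟨x, ⟨Or.inl hxS', by rw [heq, hxd]⟩, hcx⟩
end

section
/- (Lemma: left-consistency, case i ∈ H') Let T* join T' and T'' by edge (v, v_j), S = S' ∪ S''. Suppose w ∈ V(T')∩C_i is inconsistent in (T', S'), the set N(S'', v_j) of nearest neighbors of v_j in S'' (within T'') contains a vertex of color i, and dist(w, S') − dist(w, v) ≥ dist(v_j, S'') + 1. Then w is consistent in (T*, S). -/
/-- Left consistency, case `i ∈ H'`: if `w` of color `i` is inconsistent in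
`(T', S')`, `N(S'', v_j)` contains a vertex of color `i`, and
`dist(w, S') − dist(w, v) ≥ ℓ'' + 1`, then `w` is consistent in `(T*, S' ∪ S'')`. -/
theorem left_consistent_inconsistent_case {V : Type*} {k : ℕ}
    (G : SimpleGraph V) (c : V → Fin k) (i : Fin k) (A B : Set V) (v vj : V)
    (hconn : G.Connected)
    (hv : v ∈ A) (hvj : vj ∈ B) (hdisj : Disjoint A B) (hcover : A ∪ B = Set.univ)
    (hlaw : ∀ w ∈ A, ∀ x ∈ B, G.edist w x = G.edist w v + 1 + G.edist vj x)
    (S' S'' : Set V) (hS'A : S' ⊆ A) (hS''B : S'' ⊆ B)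
    (hS' : S'.Nonempty) (hS'' : S''.Nonempty)
    (w : V) (hw : w ∈ A) (hci : c w = i)
    (hinc : ¬ ConsistentAt G c S' w)
    (hL : ∃ x ∈ nearest G S'' vj, c x = i)
    (hr : setDist G vj S'' + 1 ≤ setDist G w S' - G.edist w v) :
    ConsistentAt G c (S' ∪ S'') w := by
  obtain ⟨x, ⟨hxS'', hxd⟩, hcx⟩ := hL
  have hxB : x ∈ B := hS''B hxS''
  have hwx : G.edist w x = G.edist w v + 1 + setDist G vj S'' := by
    rw [hlaw w hw x hxB, hxd]
  -- edist w x realizes setDist w S''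
  have hle : ∀ y ∈ S'', G.edist w x ≤ G.edist w y := by
    intro y hy
    rw [hwx, hlaw w hw y (hS''B hy)]
    gcongr
    exact iInf₂_le y hy
  have hS''dist : G.edist w x = setDist G w S'' := by
    refine le_antisymm (le_iInf₂ hle) (iInf₂_le x hxS'')
  -- edist w v ≠ ⊤
  have hfin : G.edist w v ≠ ⊤ :=
    SimpleGraph.edist_ne_top_iff_reachable.2 (hconn w v)
  have hpos : 0 < setDist G w S' - G.edist w v :=
    lt_of_lt_of_le (by exact_mod_cast Nat.zero_lt_succ 0)
      (le_trans (le_add_self) hr)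
  have hlt : G.edist w v < setDist G w S' := tsub_pos_iff_lt.1 hpos
  have hkey : setDist G w S'' ≤ setDist G w S' := by
    have := (ENat.addLECancellable_of_ne_top hfin).le_tsub_iff_left hlt.le |>.1 hr
    calc setDist G w S'' = G.edist w v + (setDist G vj S'' + 1) := by
            rw [← hS''dist, hwx]; ring
      _ ≤ setDist G w S' := this
  refine ⟨x, ⟨Or.inr hxS'', ?_⟩, hcx.trans hci.symm⟩
  have : setDist G w (S' ∪ S'') = setDist G w S'' := by
    unfold setDist
    rw [iInf_union]
    exact inf_eq_right.2 (by exact hkey)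
  rw [this, hS''dist]
end

section
/- (Lemma 2 of the paper) Let T* join T' and T'' by edge (v, v_j) and S = S' ∪ S'' with S'' nonempty, ℓ'' = dist(v_j, S''). Let w₁, w₂ ∈ V(T') satisfy dist(w₁,S) − dist(w₁,v) ≥ dist(w₂,S) − dist(w₂,v) and dist(w₂, S') ≥ dist(w₂, S''). Then dist(w₁,S) − dist(w₁,v) = dist(w₂,S) − dist(w₂,v) = ℓ'' + 1. -/
/-- Lemma 2 of the paper. -/
theorem case1_update {V : Type*} (G : SimpleGraph V) (A B : Set V) (v vj : V)
    (hconn : G.Connected)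
    (hv : v ∈ A) (hvj : vj ∈ B) (hdisj : Disjoint A B) (hcover : A ∪ B = Set.univ)
    (hlaw : ∀ w ∈ A, ∀ x ∈ B, G.edist w x = G.edist w v + 1 + G.edist vj x)
    (S' S'' : Set V) (hS'A : S' ⊆ A) (hS''B : S'' ⊆ B) (hS'' : S''.Nonempty)
    (w1 w2 : V) (hw1 : w1 ∈ A) (hw2 : w2 ∈ A)
    (h12 : setDist G w2 (S' ∪ S'') - G.edist w2 v ≤
      setDist G w1 (S' ∪ S'') - G.edist w1 v)
    (h2 : setDist G w2 S'' ≤ setDist G w2 S') :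
    setDist G w1 (S' ∪ S'') - G.edist w1 v = setDist G vj S'' + 1 ∧
      setDist G w2 (S' ∪ S'') - G.edist w2 v = setDist G vj S'' + 1 := by
  -- the infimum over the nonempty set S'' is attained
  obtain ⟨x0, hx0, hx0e⟩ : ∃ x ∈ S'', G.edist vj x = setDist G vj S'' := by
    obtain ⟨x, hx, he⟩ := csInf_mem (s := (fun x => G.edist vj x) '' S'') (hS''.image _)
    exact ⟨x, hx, by simpa [setDist, sInf_image] using he⟩
  have hfin : ∀ a b : V, G.edist a b ≠ ⊤ :=
    fun a b => SimpleGraph.edist_ne_top_iff_reachable.mpr (hconn a b)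
  -- key: for w ∈ A, dist to S'' splits through v, vj
  have key : ∀ w ∈ A, setDist G w S'' = G.edist w v + 1 + setDist G vj S'' := by
    intro w hw
    refine le_antisymm ?_ ?_
    · calc setDist G w S'' ≤ G.edist w x0 := iInf₂_le x0 hx0
        _ = G.edist w v + 1 + setDist G vj S'' := by
            rw [hlaw w hw x0 (hS''B hx0), hx0e]
    · refine le_iInf₂ fun x hx => ?_
      rw [hlaw w hw x (hS''B hx)]
      exact add_le_add le_rfl (iInf₂_le x hx)
  have hunion : ∀ w, setDist G w (S' ∪ S'') = setDist G w S' ⊓ setDist G w S'' := by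
    intro w; exact iInf_union
  have cancel : ∀ (a b : ℕ∞), a ≠ ⊤ → a + b - a = b :=
    fun a b h => (ENat.addLECancellable_of_ne_top h).add_tsub_cancel_left
  -- compute for w2
  have hw2val : setDist G w2 (S' ∪ S'') - G.edist w2 v = setDist G vj S'' + 1 := by
    rw [hunion, inf_eq_right.mpr h2, key w2 hw2, add_assoc, cancel _ _ (hfin w2 v),
      add_comm]
  refine ⟨?_, hw2val⟩
  -- w1: upper bound then antisymmetry with h12
  have hub : setDist G w1 (S' ∪ S'') - G.edist w1 v ≤ setDist G vj S'' + 1 := by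
    rw [tsub_le_iff_left]
    calc setDist G w1 (S' ∪ S'') ≤ setDist G w1 S'' := by
          rw [hunion]; exact inf_le_right
      _ = G.edist w1 v + (setDist G vj S'' + 1) := by
          rw [key w1 hw1, add_assoc, add_comm 1]
  rw [hw2val] at h12
  exact le_antisymm hub h12
end

section
/- (Left-inconsistency, case i ∉ H') Let T* join T' and T'' by edge (v, v_j), S = S' ∪ S'' with S'' nonempty. Suppose there exists w ∈ V(T')∩C_i with dist(w, S') − dist(w, v) > dist(v_j, S'') + 1, and N(S'', v_j) contains no vertex of color i. Then color i is inconsistent in (T*, S), i.e., some vertex of color i in T* has no same-colored nearest neighbor in S. -/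
lemma setDist_le {V : Type*} (G : SimpleGraph V) (u : V) {S : Set V} {x : V} (hx : x ∈ S) :
    setDist G u S ≤ G.edist u x := iInf₂_le x hx

lemma exists_nearest {V : Type*} (G : SimpleGraph V) (u : V) {S : Set V} (hS : S.Nonempty)
    (hfin : ∀ x, G.edist u x ≠ ⊤) :
    ∃ x ∈ S, (∀ y ∈ S, G.edist u x ≤ G.edist u y) ∧ G.edist u x = setDist G u S := by
  set T : Set ℕ := {n : ℕ | ∃ x ∈ S, G.edist u x = n} with hT
  obtain ⟨y, hy⟩ := hS
  have hTne : T.Nonempty := ⟨(G.edist u y).toNat, y, hy, (ENat.coe_toNat (hfin y)).symm⟩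
  obtain ⟨x₀, hx₀S, hx₀⟩ := Nat.sInf_mem hTne
  have key : ∀ x ∈ S, G.edist u x₀ ≤ G.edist u x := by
    intro x hx
    rw [hx₀, ← ENat.coe_toNat (hfin x)]
    have hmem : (G.edist u x).toNat ∈ T := ⟨x, hx, (ENat.coe_toNat (hfin x)).symm⟩
    exact_mod_cast Nat.sInf_le hmem
  exact ⟨x₀, hx₀S, key, le_antisymm (le_iInf₂ key) (setDist_le G u hx₀S)⟩

/-- Left inconsistency, case `i ∉ H'`: if some `w ∈ V(T') ∩ C_i` has
`dist(w,S') − dist(w,v) > ℓ'' + 1` and `N(S'', v_j)` has no vertex of color `i`,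
then color `i` is inconsistent in `(T*, S' ∪ S'')`. -/
theorem left_inconsistent_not_H {V : Type*} {k : ℕ}
    (G : SimpleGraph V) (c : V → Fin k) (i : Fin k) (A B : Set V) (v vj : V)
    (hconn : G.Connected)
    (hv : v ∈ A) (hvj : vj ∈ B) (hdisj : Disjoint A B) (hcover : A ∪ B = Set.univ)
    (hlaw : ∀ w ∈ A, ∀ x ∈ B, G.edist w x = G.edist w v + 1 + G.edist vj x)
    (S' S'' : Set V) (hS'A : S' ⊆ A) (hS''B : S'' ⊆ B) (hS'' : S''.Nonempty)
    (hfar : ∃ w ∈ A, c w = i ∧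
      setDist G vj S'' + 1 < setDist G w S' - G.edist w v)
    (hL : ¬ ∃ x ∈ nearest G S'' vj, c x = i) :
    ∃ u : V, c u = i ∧ ¬ ConsistentAt G c (S' ∪ S'') u := by
  obtain ⟨w, hwA, hwc, hfar⟩ := hfar
  have hfin : ∀ a b : V, G.edist a b ≠ ⊤ := fun a b => by
    rw [SimpleGraph.edist_ne_top_iff_reachable]; exact hconn a b
  set D : ℕ∞ := G.edist w v + 1 with hD
  have hDne : D ≠ ⊤ := by
    rw [hD]
    exact WithTop.add_ne_top.mpr ⟨hfin w v, WithTop.one_ne_top⟩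
  -- edist w x for x ∈ S''
  have hwx : ∀ x ∈ S'', G.edist w x = D + G.edist vj x := fun x hx =>
    hlaw w hwA x (hS''B hx)
  -- nearest point of vj in S''
  obtain ⟨x₀, hx₀S, hx₀min, hx₀eq⟩ := exists_nearest G vj hS'' (hfin vj)
  -- Claim A : D + setDist G vj S'' < setDist G w S'
  have hA : D + setDist G vj S'' < setDist G w S' := by
    have h1 : G.edist w v + (setDist G vj S'' + 1) < setDist G w S' := by
      rw [← lt_tsub_iff_left]; exact hfar
    calc D + setDist G vj S'' = G.edist w v + (setDist G vj S'' + 1) := by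
          rw [hD]; ring
      _ < setDist G w S' := h1
  -- upper bound on setDist w (S' ∪ S'')
  have hub : setDist G w (S' ∪ S'') ≤ D + setDist G vj S'' := by
    calc setDist G w (S' ∪ S'') ≤ G.edist w x₀ := setDist_le G w (Or.inr hx₀S)
      _ = D + G.edist vj x₀ := hwx x₀ hx₀S
      _ = D + setDist G vj S'' := by rw [hx₀eq]
  refine ⟨w, hwc, ?_⟩
  rintro ⟨x, ⟨hxS, hxd⟩, hxc⟩
  rcases hxS with hxS' | hxS''
  · have h1 : setDist G w S' ≤ G.edist w x := setDist_le G w hxS'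
    have h2 : G.edist w x ≤ D + setDist G vj S'' := hxd ▸ hub
    exact absurd (h1.trans h2) hA.not_ge
  · have h2 : G.edist w x ≤ D + setDist G vj S'' := hxd ▸ hub
    rw [hwx x hxS''] at h2
    have h3 : setDist G vj S'' ≤ G.edist vj x := setDist_le G vj hxS''
    have h4 : D + G.edist vj x = D + setDist G vj S'' :=
      le_antisymm h2 (add_le_add_right h3 D)
    have h5 : G.edist vj x = setDist G vj S'' := WithTop.add_left_cancel hDne h4
    exact hL ⟨x, ⟨hxS'', h5⟩, hxc.trans hwc⟩
end

section
/- (Left-inconsistency, case i ∈ H', i ∉ L'') Let T* join T' and T'' by edge (v, v_j), S = S' ∪ S''. Suppose w ∈ V(T')∩C_i is inconsistent in (T', S') and neither N(S', w) nor N(S'', v_j) contains a vertex of color i. Then w is inconsistent in (T*, S). -/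
/-- Left inconsistency, case `i ∈ H'`, `i ∉ L''`. -/
theorem left_inconsistent_H_notL {V : Type*} {k : ℕ}
    (G : SimpleGraph V) (c : V → Fin k) (i : Fin k) (A B : Set V) (v vj : V)
    (hconn : G.Connected)
    (hv : v ∈ A) (hvj : vj ∈ B) (hdisj : Disjoint A B) (hcover : A ∪ B = Set.univ)
    (hlaw : ∀ w ∈ A, ∀ x ∈ B, G.edist w x = G.edist w v + 1 + G.edist vj x)
    (S' S'' : Set V) (hS'A : S' ⊆ A) (hS''B : S'' ⊆ B)
    (w : V) (hw : w ∈ A) (hci : c w = i)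
    (hinc : ¬ ConsistentAt G c S' w)
    (hL' : ¬ ∃ x ∈ nearest G S' w, c x = i)
    (hL'' : ¬ ∃ x ∈ nearest G S'' vj, c x = i) :
    ¬ ConsistentAt G c (S' ∪ S'') w := by
  rintro ⟨x, ⟨hxS, hxd⟩, hcx⟩
  rw [hci] at hcx
  have hle : ∀ y ∈ S' ∪ S'', setDist G w (S' ∪ S'') ≤ G.edist w y := fun y hy => iInf₂_le y hy
  cases hxS with
  | inl h =>
    apply hL'
    refine ⟨x, ⟨h, ?_⟩, hcx⟩
    have h1 : setDist G w S' ≤ G.edist w x := iInf₂_le x h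
    have h2 : G.edist w x ≤ setDist G w S' := by
      rw [hxd]
      exact le_iInf₂ fun y hy => hle y (Or.inl hy)
    exact le_antisymm h2 h1
  | inr h =>
    apply hL''
    refine ⟨x, ⟨h, ?_⟩, hcx⟩
    have hfin : G.edist w v ≠ ⊤ := SimpleGraph.edist_ne_top_iff_reachable.mpr (hconn w v)
    have key : ∀ y ∈ S'', G.edist vj x ≤ G.edist vj y := by
      intro y hy
      have h1 : G.edist w x ≤ G.edist w y := hxd ▸ hle y (Or.inr hy)
      rw [hlaw w hw x (hS''B h), hlaw w hw y (hS''B hy), add_assoc, add_assoc] at h1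
      have h2 := (WithTop.add_le_add_iff_left hfin).mp h1
      exact (WithTop.add_le_add_iff_left (by simp : (1 : ℕ∞) ≠ ⊤)).mp h2
    have hmin : G.edist vj x ≤ setDist G vj S'' := le_iInf₂ key
    exact le_antisymm hmin (iInf₂_le x h)
end

section
/- (Consistency merge lemma, Lemma 1 of the paper, combined form) Let T* join T' and T'' by edge (v, v_j), S = S' ∪ S''. If color i is both left consistent and right consistent (as defined via the tuples (ℓ', L', H', r'_i) of (T',S') and (ℓ'', L'', H'', r''_i) of (T'',S'')), then color i is consistent in (T*, S): every vertex of color i in T* has a nearest neighbor in S of color i. -/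
/-- Color `i` is inconsistent in the part of the graph with vertex set `A`,
with respect to the candidate set `S` (distances taken in `G`, which agree with
the subtree distances). -/
def ColorInconsistentOn {V : Type*} {k : ℕ} (G : SimpleGraph V) (c : V → Fin k)
    (i : Fin k) (A : Set V) (S : Set V) : Prop :=
  ∃ w ∈ A, c w = i ∧ ¬ ConsistentAt G c S w

/-- Color `i` occurs among the nearest neighbors of `u` in `S` (the set `L`). -/
def ColorInNearest {V : Type*} {k : ℕ} (G : SimpleGraph V) (c : V → Fin k)
    (i : Fin k) (S : Set V) (u : V) : Prop :=
  ∃ x ∈ nearest G S u, c x = i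

open Classical in
/-- The value `r_i` of the tuple for the subtree on vertex set `A` rooted at `u`
with candidate set `S`: the minimum of `dist(w,S) − dist(w,u)` over inconsistent
vertices `w` of color `i` if color `i` is inconsistent, and the maximum of
`dist(w,S) − dist(w,u)` over all vertices `w` of color `i` otherwise.
(Truncated subtraction in `ℕ∞` clamps negative values to `0`, the empty supremum
is `0`, and the value is `∞` when `S = ∅` in the inconsistent case.) -/
noncomputable def rval {V : Type*} {k : ℕ} (G : SimpleGraph V) (c : V → Fin k)
    (i : Fin k) (A : Set V) (u : V) (S : Set V) : ℕ∞ :=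
  if ColorInconsistentOn G c i A S then
    ⨅ w ∈ {w ∈ A | c w = i ∧ ¬ ConsistentAt G c S w}, (setDist G w S - G.edist w u)
  else
    ⨆ w ∈ {w ∈ A | c w = i}, (setDist G w S - G.edist w u)

/-- Color `i` is left consistent for the join of `(T', S')` (vertices `A`, root `v`)
and `(T'', S'')` (vertices `B`, root `v_j`). -/
def LeftConsistent {V : Type*} {k : ℕ} (G : SimpleGraph V) (c : V → Fin k)
    (i : Fin k) (A B : Set V) (v vj : V) (S' S'' : Set V) : Prop :=
  (¬ ColorInconsistentOn G c i A S' ∧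
    (rval G c i A v S' ≤ setDist G vj S'' + 1 ∨ ColorInNearest G c i S'' vj)) ∨
  (ColorInconsistentOn G c i A S' ∧ ColorInNearest G c i S'' vj ∧
    setDist G vj S'' + 1 ≤ rval G c i A v S')

/-- Color `i` is right consistent: the symmetric condition. -/
def RightConsistent {V : Type*} {k : ℕ} (G : SimpleGraph V) (c : V → Fin k)
    (i : Fin k) (A B : Set V) (v vj : V) (S' S'' : Set V) : Prop :=
  (¬ ColorInconsistentOn G c i B S'' ∧
    (rval G c i B vj S'' ≤ setDist G v S' + 1 ∨ ColorInNearest G c i S' v)) ∨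
  (ColorInconsistentOn G c i B S'' ∧ ColorInNearest G c i S' v ∧
    setDist G v S' + 1 ≤ rval G c i B vj S'')

lemma biInf_add_eq {α : Type*} (S : Set α) (a : ℕ∞) (f : α → ℕ∞) :
    ⨅ x ∈ S, (a + f x) = a + ⨅ x ∈ S, f x := by
  apply le_antisymm
  · calc ⨅ x ∈ S, (a + f x) ≤ ((⨅ x ∈ S, (a + f x)) - a) + a := le_tsub_add
    _ ≤ (⨅ x ∈ S, f x) + a :=
        add_le_add_left (le_iInf₂ fun x hx => tsub_le_iff_left.mpr (iInf₂_le x hx)) a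
    _ = a + ⨅ x ∈ S, f x := add_comm _ _
  · exact le_iInf₂ fun x hx => add_le_add_right (iInf₂_le x hx) a

lemma merge_half {V : Type*} {k : ℕ} (G : SimpleGraph V) (c : V → Fin k) (i : Fin k)
    (A B : Set V) (v vj : V) (S' S'' : Set V)
    (hlaw : ∀ w ∈ A, ∀ x ∈ S'', G.edist w x = G.edist w v + 1 + G.edist vj x)
    (hleft : LeftConsistent G c i A B v vj S' S'')
    (w : V) (hw : w ∈ A) (hcw : c w = i) :
    ConsistentAt G c (S' ∪ S'') w := by
  set d := G.edist w v with hd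
  set d' := setDist G w S' with hd'
  set D := setDist G vj S'' with hD
  have hS2 : setDist G w S'' = d + 1 + D := by
    calc setDist G w S'' = ⨅ x ∈ S'', (d + 1 + G.edist vj x) :=
          iInf_congr fun x => iInf_congr fun hx => hlaw w hw x hx
    _ = d + 1 + ⨅ x ∈ S'', G.edist vj x := biInf_add_eq S'' (d + 1) (G.edist vj)
    _ = d + 1 + D := rfl
  have hU : setDist G w (S' ∪ S'') = d' ⊓ (d + 1 + D) := by
    have h : setDist G w (S' ∪ S'') = setDist G w S' ⊓ setDist G w S'' := iInf_union
    rw [h, hS2]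
  have P1 : ConsistentAt G c S' w → d' ≤ d + 1 + D → ConsistentAt G c (S' ∪ S'') w := by
    rintro ⟨x, ⟨hxS, hxd⟩, hxc⟩ hle
    exact ⟨x, ⟨Or.inl hxS, by rw [hxd, hU, inf_eq_left.mpr hle]⟩, hxc⟩
  have P2 : ColorInNearest G c i S'' vj → d + 1 + D ≤ d' → ConsistentAt G c (S' ∪ S'') w := by
    rintro ⟨y, ⟨hyS, hyd⟩, hyc⟩ hle
    refine ⟨y, ⟨Or.inr hyS, ?_⟩, by rw [hyc, hcw]⟩
    rw [hlaw w hw y hyS, hyd, hU, inf_eq_right.mpr hle]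
  by_cases hcon : ConsistentAt G c S' w
  · by_cases hle : d' ≤ d + 1 + D
    · exact P1 hcon hle
    · have hL : ColorInNearest G c i S'' vj := by
        rcases hleft with ⟨hH, hr | hL⟩ | ⟨hH, hL, _⟩
        · exfalso; apply hle
          have h1 : d' - d ≤ rval G c i A v S' := by
            unfold rval
            rw [if_neg hH]
            exact le_iSup₂ (f := fun w _ => setDist G w S' - G.edist w v) w ⟨hw, hcw⟩
          have h2 : d' - d ≤ D + 1 := h1.trans hr
          calc d' ≤ D + 1 + d := tsub_le_iff_right.mp h2
          _ = d + 1 + D := by ring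
        · exact hL
        · exact hL
      exact P2 hL (le_of_not_ge hle)
  · have hH : ColorInconsistentOn G c i A S' := ⟨w, hw, hcw, hcon⟩
    rcases hleft with ⟨hH', _⟩ | ⟨_, hL, hr⟩
    · exact absurd hH hH'
    · have h1 : rval G c i A v S' ≤ d' - d := by
        unfold rval
        rw [if_pos hH]
        exact iInf₂_le w ⟨hw, hcw, hcon⟩
      have h2 : D + 1 ≤ d' - d := hr.trans h1
      have hdlt : d < d' := by
        have h0 : (0 : ℕ∞) < d' - d :=
          lt_of_lt_of_le (zero_lt_one.trans_le le_add_self) h2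
        exact tsub_pos_iff_lt.mp h0
      have h3 : d + (D + 1) ≤ d + (d' - d) := add_le_add_right h2 d
      have h4 : d + (d' - d) = d' := add_tsub_cancel_of_le hdlt.le
      have h5 : d + 1 + D ≤ d' := by
        calc d + 1 + D = d + (D + 1) := by ring
        _ ≤ d' := h4 ▸ h3
      exact P2 hL h5

/-- Lemma 1 of the paper: if color `i` is left and right consistent, then it is
consistent in `(T*, S' ∪ S'')`. -/
theorem consistency_merge {V : Type*} {k : ℕ}
    (G : SimpleGraph V) (c : V → Fin k) (i : Fin k) (A B : Set V) (v vj : V)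
    (hconn : G.Connected)
    (hv : v ∈ A) (hvj : vj ∈ B) (hdisj : Disjoint A B) (hcover : A ∪ B = Set.univ)
    (hlaw : ∀ w ∈ A, ∀ x ∈ B, G.edist w x = G.edist w v + 1 + G.edist vj x)
    (S' S'' : Set V) (hS'A : S' ⊆ A) (hS''B : S'' ⊆ B)
    (hleft : LeftConsistent G c i A B v vj S' S'')
    (hright : RightConsistent G c i A B v vj S' S'') :
    ∀ w : V, c w = i → ConsistentAt G c (S' ∪ S'') w := by
  intro w hcw
  have hw : w ∈ A ∪ B := by rw [hcover]; trivial
  rcases hw with hwA | hwB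
  · exact merge_half G c i A B v vj S' S''
      (fun w hw x hx => hlaw w hw x (hS''B hx)) hleft w hwA hcw
  · rw [Set.union_comm]
    refine merge_half G c i B A vj v S'' S' ?_ ?_ w hwB hcw
    · intro y hy x hx
      rw [SimpleGraph.edist_comm (G := G) (u := y) (v := x), hlaw x (hS'A hx) y hy,
        SimpleGraph.edist_comm (G := G) (u := x) (v := v),
        SimpleGraph.edist_comm (G := G) (u := vj) (v := y)]
      ring
    · exact hright
end

section
/- (Inconsistency merge lemma, Lemma 3 of the paper) Let T* join T' and T'' by edge (v, v_j), S = S' ∪ S''. If color i is left inconsistent or right inconsistent, then color i is inconsistent in (T*, S): some vertex of color i in T* has no nearest neighbor in S of color i. -/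
section AuxLemmas

lemma enat_lt_of_tsub_lt {a b c : ℕ∞} (hb : b ≠ ⊤) (h : a - b < c) : a < b + c := by
  by_contra hc
  push_neg at hc
  exact h.not_ge ((ENat.addLECancellable_of_ne_top hb).le_tsub_of_add_le_left hc)

lemma enat_add_lt_of_lt_tsub {a b c : ℕ∞} (hb : b ≠ ⊤) (h : c < a - b) : b + c < a :=
  ((ENat.addLECancellable_of_ne_top hb).lt_tsub_iff_left).mp h

lemma enat_exists_biInf_eq {ι : Type*} {s : Set ι} (hs : s.Nonempty) (f : ι → ℕ∞) :
    ∃ x ∈ s, f x = ⨅ y ∈ s, f y := by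
  by_cases htop : (⨅ y ∈ s, f y) = ⊤
  · obtain ⟨x, hx⟩ := hs
    exact ⟨x, hx, top_le_iff.mp (htop ▸ iInf₂_le x hx : (⊤:ℕ∞) ≤ f x) ▸ htop.symm ▸ rfl⟩
  · have h1 : (⨅ y ∈ s, f y) < (⨅ y ∈ s, f y) + 1 :=
      (ENat.lt_add_one_iff htop).mpr le_rfl
    simp only [iInf_lt_iff] at h1
    obtain ⟨x, hx, hlt⟩ := h1
    exact ⟨x, hx, le_antisymm ((ENat.lt_add_one_iff htop).mp hlt) (iInf₂_le x hx)⟩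

lemma enat_add_biInf {ι : Type*} (a : ℕ∞) (s : Set ι) (f : ι → ℕ∞) :
    a + ⨅ x ∈ s, f x = ⨅ x ∈ s, (a + f x) := by
  rcases s.eq_empty_or_nonempty with rfl | hs
  · simp
  · refine le_antisymm (le_iInf₂ fun x hx => add_le_add_right (iInf₂_le x hx) a) ?_
    obtain ⟨x, hx, hfx⟩ := enat_exists_biInf_eq hs f
    exact (iInf₂_le x hx).trans (by rw [hfx])

lemma setDist_union_eq_min {V : Type*} (G : SimpleGraph V) (u : V) (S T : Set V) :
    setDist G u (S ∪ T) = min (setDist G u S) (setDist G u T) := by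
  rw [setDist, iInf_union]; rfl

lemma setDist_le_edist {V : Type*} {G : SimpleGraph V} {u x : V} {S : Set V} (hx : x ∈ S) :
    setDist G u S ≤ G.edist u x := iInf₂_le x hx

lemma setDist_cross {V : Type*} (G : SimpleGraph V) {w v' vj : V} {S'' : Set V}
    (hlaw2 : ∀ x ∈ S'', G.edist w x = G.edist w v' + 1 + G.edist vj x) :
    setDist G w S'' = G.edist w v' + 1 + setDist G vj S'' := by
  rw [setDist, setDist, enat_add_biInf]
  exact iInf_congr fun x => iInf_congr fun hx => hlaw2 x hx

/-- Key one-sided lemma: failure of `LeftConsistent` gives an inconsistent vertex. -/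
lemma inconsistency_merge_key {V : Type*} {k : ℕ}
    (G : SimpleGraph V) (c : V → Fin k) (i : Fin k) (A B : Set V) (v vj : V)
    (hconn : G.Connected)
    (hlaw : ∀ w ∈ A, ∀ x ∈ B, G.edist w x = G.edist w v + 1 + G.edist vj x)
    (S' S'' : Set V) (hS'A : S' ⊆ A) (hS''B : S'' ⊆ B)
    (h : ¬ LeftConsistent G c i A B v vj S' S'') :
    ∃ w : V, c w = i ∧ ¬ ConsistentAt G c (S' ∪ S'') w := by
  have hfin : ∀ w u : V, G.edist w u ≠ ⊤ := fun w u =>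
    SimpleGraph.edist_ne_top_iff_reachable.mpr (hconn.preconnected w u)
  have hcross : ∀ w ∈ A, setDist G w S'' = G.edist w v + 1 + setDist G vj S'' :=
    fun w hw => setDist_cross G (fun x hx => hlaw w hw x (hS''B hx))
  have stay : ∀ w ∈ A, setDist G w S' < G.edist w v + 1 + setDist G vj S'' →
      ¬ ConsistentAt G c S' w → ¬ ConsistentAt G c (S' ∪ S'') w := by
    intro w hw hlt hni hcon
    obtain ⟨x, ⟨hxS, hxd⟩, hcx⟩ := hcon
    have hm : setDist G w (S' ∪ S'') = setDist G w S' := by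
      rw [setDist_union_eq_min, min_eq_left]
      rw [← hcross w hw] at hlt
      exact hlt.le
    rcases hxS with hxS' | hxS''
    · exact hni ⟨x, ⟨hxS', hxd.trans hm⟩, hcx⟩
    · have h1 : G.edist w v + 1 + setDist G vj S'' ≤ G.edist w x := by
        rw [← hcross w hw]; exact setDist_le_edist hxS''
      have h2 : G.edist w x < G.edist w v + 1 + setDist G vj S'' := by
        rw [hxd, hm]; exact hlt
      exact absurd h1 h2.not_ge
  have noi : ∀ w ∈ A, c w = i → ¬ ColorInNearest G c i S'' vj →
      (∀ x ∈ S', G.edist w x = setDist G w (S' ∪ S'') → c x ≠ i) →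
      ¬ ConsistentAt G c (S' ∪ S'') w := by
    intro w hw hcw hL hS hcon
    obtain ⟨x, ⟨hxS, hxd⟩, hcx⟩ := hcon
    rcases hxS with hxS' | hxS''
    · exact hS x hxS' hxd (hcx.trans hcw)
    · have h1 : G.edist w x ≤ G.edist w v + 1 + setDist G vj S'' := by
        rw [hxd, setDist_union_eq_min, ← hcross w hw]
        exact min_le_right _ _
      have h2 : G.edist w x = G.edist w v + 1 + G.edist vj x :=
        hlaw w hw x (hS''B hxS'')
      have h3 : G.edist w v + 1 + G.edist vj x ≤ G.edist w v + 1 + setDist G vj S'' :=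
        h2 ▸ h1
      have h4 : G.edist vj x ≤ setDist G vj S'' := by
        have hc' : (G.edist w v + 1 : ℕ∞) ≠ ⊤ := by
          intro ht
          exact hfin w v (by simpa using ht)
        exact (ENat.addLECancellable_of_ne_top hc') h3
      have h5 : G.edist vj x = setDist G vj S'' :=
        le_antisymm h4 (setDist_le_edist hxS'')
      exact hL ⟨x, ⟨hxS'', h5⟩, hcx.trans hcw⟩
  by_cases hInc : ColorInconsistentOn G c i A S'
  · have h2 : ¬ (ColorInNearest G c i S'' vj ∧
        setDist G vj S'' + 1 ≤ rval G c i A v S') := by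
      intro hcontra
      exact h (Or.inr ⟨hInc, hcontra.1, hcontra.2⟩)
    rw [not_and_or, not_le] at h2
    rcases h2 with hL | hr
    · obtain ⟨w, hwA, hcw, hwinc⟩ := hInc
      refine ⟨w, hcw, noi w hwA hcw hL ?_⟩
      intro x hxS' hxd hcxi
      have hx1 : setDist G w (S' ∪ S'') ≤ setDist G w S' := by
        rw [setDist_union_eq_min]; exact min_le_left _ _
      have hx2 : x ∈ nearest G S' w :=
        ⟨hxS', le_antisymm (hxd ▸ hx1) (setDist_le_edist hxS')⟩
      exact hwinc ⟨x, hx2, hcxi.trans hcw.symm⟩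
    · rw [rval, if_pos hInc] at hr
      simp only [iInf_lt_iff] at hr
      obtain ⟨w, hw, hlt⟩ := hr
      obtain ⟨hwA, hcw, hwinc⟩ := hw
      refine ⟨w, hcw, stay w hwA ?_ hwinc⟩
      have hkey := enat_lt_of_tsub_lt (hfin w v) hlt
      calc setDist G w S' < G.edist w v + (setDist G vj S'' + 1) := hkey
        _ = G.edist w v + 1 + setDist G vj S'' := by ring
  · have h2 : ¬ (rval G c i A v S' ≤ setDist G vj S'' + 1 ∨
        ColorInNearest G c i S'' vj) := fun hcontra => h (Or.inl ⟨hInc, hcontra⟩)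
    rw [not_or, not_le] at h2
    obtain ⟨hr, hL⟩ := h2
    rw [rval, if_neg hInc] at hr
    simp only [lt_iSup_iff] at hr
    obtain ⟨w, hw, hlt⟩ := hr
    obtain ⟨hwA, hcw⟩ := hw
    have hfar : G.edist w v + 1 + setDist G vj S'' < setDist G w S' := by
      have hkey := enat_add_lt_of_lt_tsub (hfin w v) hlt
      calc G.edist w v + 1 + setDist G vj S''
          = G.edist w v + (setDist G vj S'' + 1) := by ring
        _ < setDist G w S' := hkey
    refine ⟨w, hcw, noi w hwA hcw hL ?_⟩
    intro x hxS' hxd hcxi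
    have hx1 : setDist G w (S' ∪ S'') ≤ G.edist w v + 1 + setDist G vj S'' := by
      rw [setDist_union_eq_min, ← hcross w hwA]
      exact min_le_right _ _
    have hlt2 : G.edist w x < setDist G w S' := lt_of_le_of_lt (hxd ▸ hx1) hfar
    exact absurd (setDist_le_edist hxS') hlt2.not_ge

end AuxLemmas

/-- Lemma 3 of the paper: if color `i` is left inconsistent or right inconsistent,
then it is inconsistent in `(T*, S' ∪ S'')`. -/
theorem inconsistency_merge {V : Type*} {k : ℕ}
    (G : SimpleGraph V) (c : V → Fin k) (i : Fin k) (A B : Set V) (v vj : V)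
    (hconn : G.Connected)
    (hv : v ∈ A) (hvj : vj ∈ B) (hdisj : Disjoint A B) (hcover : A ∪ B = Set.univ)
    (hlaw : ∀ w ∈ A, ∀ x ∈ B, G.edist w x = G.edist w v + 1 + G.edist vj x)
    (S' S'' : Set V) (hS'A : S' ⊆ A) (hS''B : S'' ⊆ B)
    (h : ¬ LeftConsistent G c i A B v vj S' S'' ∨
         ¬ RightConsistent G c i A B v vj S' S'') :
    ∃ w : V, c w = i ∧ ¬ ConsistentAt G c (S' ∪ S'') w := by
  rcases h with hL | hR
  · exact inconsistency_merge_key G c i A B v vj hconn hlaw S' S'' hS'A hS''B hL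
  · have hlaw' : ∀ x ∈ B, ∀ w ∈ A, G.edist x w = G.edist x vj + 1 + G.edist v w := by
      intro x hx w hw
      rw [show G.edist x w = G.edist w x from SimpleGraph.edist_comm,
        show G.edist x vj = G.edist vj x from SimpleGraph.edist_comm,
        show G.edist v w = G.edist w v from SimpleGraph.edist_comm,
        hlaw w hw x hx]
      ring
    have hR' : ¬ LeftConsistent G c i B A vj v S'' S' := hR
    obtain ⟨w, hcw, hni⟩ :=
      inconsistency_merge_key G c i B A vj v hconn hlaw' S'' S' hS''B hS'A hR'
    exact ⟨w, hcw, by rwa [Set.union_comm]⟩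
end

section
/- Let T* join T' and T'' by edge (v, v_j), S = S' ∪ S'' with S' nonempty, and suppose color i is consistent in (T', S') with r'_i := max_{w ∈ V(T')∩C_i} (dist(w,S') − dist(w,v)) ≤ dist(v_j,S'') + 1 = ℓ''+1. Then for every w ∈ V(T')∩C_i, dist(w, S) = dist(w, S'), and consequently max_{w ∈ V(T')∩C_i} (dist(w,S) − dist(w,v)) = r'_i. -/
/-- If color `i` is consistent in `(T', S')` and
`r'_i = max_{w ∈ V(T') ∩ C_i} (dist(w,S') − dist(w,v)) ≤ ℓ'' + 1`, then
`dist(w, S) = dist(w, S')` for every `w ∈ V(T') ∩ C_i`, hence the maximum of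
`dist(w,S) − dist(w,v)` equals `r'_i`. -/
theorem rleft_preserved {V : Type*} {k : ℕ}
    (G : SimpleGraph V) (c : V → Fin k) (i : Fin k) (A B : Set V) (v vj : V)
    (hconn : G.Connected)
    (hv : v ∈ A) (hvj : vj ∈ B) (hdisj : Disjoint A B) (hcover : A ∪ B = Set.univ)
    (hlaw : ∀ w ∈ A, ∀ x ∈ B, G.edist w x = G.edist w v + 1 + G.edist vj x)
    (S' S'' : Set V) (hS'A : S' ⊆ A) (hS''B : S'' ⊆ B)
    (hCne : (A ∩ {w | c w = i}).Nonempty) (hS' : S'.Nonempty)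
    (hcons : ∀ w ∈ A, c w = i → ConsistentAt G c S' w)
    (hr : (⨆ w ∈ A ∩ {w | c w = i}, (setDist G w S' - G.edist w v)) ≤
      setDist G vj S'' + 1) :
    (∀ w ∈ A ∩ {w | c w = i}, setDist G w (S' ∪ S'') = setDist G w S') ∧
      (⨆ w ∈ A ∩ {w | c w = i}, (setDist G w (S' ∪ S'') - G.edist w v)) =
        ⨆ w ∈ A ∩ {w | c w = i}, (setDist G w S' - G.edist w v) := by
  have key : ∀ w ∈ A ∩ {w | c w = i}, setDist G w (S' ∪ S'') = setDist G w S' := by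
    intro w hw
    obtain ⟨hwA, hwc⟩ := hw
    have hbound : setDist G w S' - G.edist w v ≤ setDist G vj S'' + 1 :=
      le_trans (le_iSup₂_of_le w ⟨hwA, hwc⟩ le_rfl) hr
    have hle : setDist G w S' ≤ G.edist w v + 1 + setDist G vj S'' := by
      have h1 := tsub_le_iff_right.mp hbound
      calc setDist G w S' ≤ setDist G vj S'' + 1 + G.edist w v := h1
        _ = G.edist w v + 1 + setDist G vj S'' := by ring
    refine le_antisymm ?_ ?_
    · exact le_iInf₂ fun x hx => iInf₂_le x (Or.inl hx)
    · refine le_iInf₂ fun x hx => ?_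
      rcases hx with hx | hx
      · exact iInf₂_le x hx
      · rw [hlaw w hwA x (hS''B hx)]
        refine hle.trans (add_le_add_right ?_ _)
        exact iInf₂_le x hx
  exact ⟨key, iSup_congr fun w => iSup_congr fun hw => by rw [key w hw]⟩
end
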